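/- arXiv:2505.19491 — 4 statements merged into one kernel-verified Lean document; each statement's English description precedes it below -/
import Mathlib

section
/- Let λ ∈ (0,1) and run OGD with step size η = D·√(2(1−λ))/G. Then for every w ∈ W, the λ-discounted regret satisfies ∑_{t=1}^T λ^{T−t}·f_t(w_t) − ∑_{t=1}^T λ^{T−t}·f_t(w) ≤ D·G·√2/√(1−λ). -/
open RealInnerProductSpace

lemma grad_ineq {d : ℕ} {f : EuclideanSpace ℝ (Fin d) → ℝ}
    (hconv : ConvexOn ℝ Set.univ f) (hdiff : Differentiable ℝ f)
    (x y : EuclideanSpace ℝ (Fin d)) :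
    ⟪gradient f x, y - x⟫ ≤ f y - f x := by
  set g : ℝ → ℝ := fun s => f (x + s • (y - x)) with hg
  have hgc : ConvexOn ℝ Set.univ g := by
    have := hconv.comp_affineMap (AffineMap.lineMap x y)
    simp only [Set.preimage_univ] at this
    have hfun : g = f ∘ AffineMap.lineMap x y := by
      funext s
      simp [hg, AffineMap.lineMap_apply, Function.comp]
      rw [add_comm]
    rw [hfun]; exact this
  have hcurve : HasDerivAt (fun s : ℝ => x + s • (y - x)) (y - x) 0 := by
    simpa using ((hasDerivAt_id (0:ℝ)).smul_const (y - x)).const_add x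
  have hF : HasFDerivAt f (InnerProductSpace.toDual ℝ _ (gradient f x)) x :=
    (hdiff x).hasGradientAt
  have hgd : HasDerivAt g (⟪gradient f x, y - x⟫) 0 := by
    have := HasFDerivAt.comp_hasDerivAt 0 (by simpa using hF) hcurve
    simp [hg, Function.comp, InnerProductSpace.toDual_apply_apply] at this ⊢
    exact this
  have := hgc.le_slope_of_hasDerivAt (Set.mem_univ (0:ℝ)) (Set.mem_univ (1:ℝ))
    one_pos hgd
  simpa [slope, hg] using this
open RealInnerProductSpace

lemma proj_dist {d : ℕ} {W : Set (EuclideanSpace ℝ (Fin d))} (hWconv : Convex ℝ W)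
    {p v u : EuclideanSpace ℝ (Fin d)} (hv : v ∈ W) (hu : u ∈ W)
    (hmin : ∀ z ∈ W, ‖v - p‖ ≤ ‖z - p‖) : ‖v - u‖ ≤ ‖p - u‖ := by
  have hne : Nonempty W := ⟨⟨v, hv⟩⟩
  have heq : ‖p - v‖ = ⨅ z : W, ‖p - z‖ := by
    apply le_antisymm
    · apply le_ciInf
      intro z
      rw [norm_sub_rev, norm_sub_rev p]
      exact hmin z z.2
    · have hbdd : BddBelow (Set.range fun z : W => ‖p - z‖) :=
        ⟨0, by rintro _ ⟨z, rfl⟩; exact norm_nonneg _⟩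
      exact ciInf_le hbdd ⟨v, hv⟩
  rw [norm_eq_iInf_iff_real_inner_le_zero hWconv hv] at heq
  have hip : ⟪p - v, u - v⟫ ≤ 0 := heq u hu
  have hexp : ‖p - u‖^2 = ‖p - v‖^2 + 2 * ⟪p - v, v - u⟫ + ‖v - u‖^2 := by
    have : p - u = (p - v) + (v - u) := by abel
    rw [this, norm_add_sq_real]
  have h2 : ⟪p - v, v - u⟫ = - ⟪p - v, u - v⟫ := by
    rw [← inner_neg_right]; congr 1; abel
  nlinarith [norm_nonneg (p - u), norm_nonneg (v - u), norm_nonneg (p - v), sq_nonneg (‖p-v‖)]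

lemma abel_aux (lam D2 : ℝ) (hl0 : 0 ≤ lam) (hl1 : lam ≤ 1) (a : ℕ → ℝ) :
    ∀ T : ℕ, (∀ t, 1 ≤ t → t ≤ T + 1 → 0 ≤ a t ∧ a t ≤ D2) →
    ∑ t ∈ Finset.Icc 1 T, lam ^ (T - t) * (a t - a (t + 1)) ≤ D2 - a (T + 1) := by
  intro T
  induction T with
  | zero => intro ha; simp [(ha 1 le_rfl le_rfl).2]
  | succ T ih =>
    intro ha
    have ha' : ∀ t, 1 ≤ t → t ≤ T + 1 → 0 ≤ a t ∧ a t ≤ D2 :=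
      fun t h1 h2 => ha t h1 (h2.trans (Nat.le_succ _))
    rw [Finset.sum_Icc_succ_top (Nat.one_le_iff_ne_zero.mpr (Nat.succ_ne_zero T))]
    have hmain : ∑ t ∈ Finset.Icc 1 T, lam ^ (T + 1 - t) * (a t - a (t + 1))
        = lam * ∑ t ∈ Finset.Icc 1 T, lam ^ (T - t) * (a t - a (t + 1)) := by
      rw [Finset.mul_sum]
      apply Finset.sum_congr rfl
      intro t ht
      have htT : t ≤ T := (Finset.mem_Icc.mp ht).2
      have : T + 1 - t = (T - t) + 1 := by omega
      rw [this, pow_succ]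
      ring
    rw [hmain]
    have hih := ih ha'
    have h1 := (ha (T + 1) (by omega) (by omega))
    have h2 := (ha (T + 2) (by omega) (by omega))
    have hs : lam * ∑ t ∈ Finset.Icc 1 T, lam ^ (T - t) * (a t - a (t + 1))
        ≤ lam * (D2 - a (T + 1)) := by
      apply mul_le_mul_of_nonneg_left hih hl0
    have hz : lam ^ (T + 1 - (T + 1)) = 1 := by simp
    rw [hz, one_mul]
    nlinarith [h1.1, h1.2, h2.1]

lemma geo_aux (lam : ℝ) (hl0 : 0 ≤ lam) (hl1 : lam < 1) :
    ∀ T : ℕ, ∑ t ∈ Finset.Icc 1 T, lam ^ (T - t) ≤ 1 / (1 - lam) := by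
  intro T
  induction T with
  | zero =>
    rw [show Finset.Icc 1 0 = ∅ from rfl, Finset.sum_empty]
    exact div_nonneg zero_le_one (by linarith)
  | succ T ih =>
    rw [Finset.sum_Icc_succ_top (Nat.one_le_iff_ne_zero.mpr (Nat.succ_ne_zero T))]
    have hmain : ∑ t ∈ Finset.Icc 1 T, lam ^ (T + 1 - t)
        = lam * ∑ t ∈ Finset.Icc 1 T, lam ^ (T - t) := by
      rw [Finset.mul_sum]
      apply Finset.sum_congr rfl
      intro t ht
      have htT : t ≤ T := (Finset.mem_Icc.mp ht).2
      have : T + 1 - t = (T - t) + 1 := by omega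
      rw [this, pow_succ]
      ring
    rw [hmain]
    have hs : lam * ∑ t ∈ Finset.Icc 1 T, lam ^ (T - t) ≤ lam * (1 / (1 - lam)) :=
      mul_le_mul_of_nonneg_left ih hl0
    have hz : lam ^ (T + 1 - (T + 1)) = 1 := by simp
    rw [hz]
    have h1l : 0 < 1 - lam := by linarith
    calc lam * ∑ t ∈ Finset.Icc 1 T, lam ^ (T - t) + 1 ≤ lam * (1/(1-lam)) + 1 := by linarith
      _ = 1 / (1 - lam) := by field_simp; ring



/-- OGD with step size η = D·√(2(1−λ))/G achieves λ-discounted regret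
at most D·G·√2/√(1−λ). -/
theorem ogd_discounted_regret_tuned
    {d : ℕ} (W : Set (EuclideanSpace ℝ (Fin d)))
    (hWne : W.Nonempty) (hWclosed : IsClosed W) (hWconv : Convex ℝ W)
    (D G : ℝ) (hD : 0 < D) (hG : 0 < G)
    (hdiam : ∀ u ∈ W, ∀ v ∈ W, ‖u - v‖ ≤ D)
    (T : ℕ) (f : ℕ → EuclideanSpace ℝ (Fin d) → ℝ)
    (hconv : ∀ t ∈ Finset.Icc 1 T, ConvexOn ℝ Set.univ (f t))
    (hdiff : ∀ t ∈ Finset.Icc 1 T, Differentiable ℝ (f t))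
    (hgrad : ∀ t ∈ Finset.Icc 1 T, ∀ u ∈ W, ‖gradient (f t) u‖ ≤ G)
    (lam : ℝ) (hlam : lam ∈ Set.Ioo (0 : ℝ) 1)
    (η : ℝ) (hη : η = D * Real.sqrt (2 * (1 - lam)) / G)
    (w : ℕ → EuclideanSpace ℝ (Fin d))
    (hw1 : w 1 ∈ W) (hwmem : ∀ t, w (t + 1) ∈ W)
    (hproj : ∀ t, 1 ≤ t → t ≤ T → ∀ u ∈ W,
      ‖w (t + 1) - (w t - η • gradient (f t) (w t))‖ ≤
        ‖u - (w t - η • gradient (f t) (w t))‖)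
    (wstar : EuclideanSpace ℝ (Fin d)) (hwstar : wstar ∈ W) :
    ∑ t ∈ Finset.Icc 1 T, lam ^ (T - t) * f t (w t)
      - ∑ t ∈ Finset.Icc 1 T, lam ^ (T - t) * f t wstar
      ≤ D * G * Real.sqrt 2 / Real.sqrt (1 - lam) := by
  obtain ⟨hlam0, hlam1⟩ := hlam
  have h1l : 0 < 1 - lam := by linarith
  set s1 := Real.sqrt (1 - lam) with hs1def
  set s2 := Real.sqrt 2 with hs2def
  have hs1 : s1 ^ 2 = 1 - lam := Real.sq_sqrt h1l.le
  have hs2 : s2 ^ 2 = 2 := Real.sq_sqrt (by norm_num)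
  have hs1p : 0 < s1 := Real.sqrt_pos.mpr h1l
  have hs2p : 0 < s2 := Real.sqrt_pos.mpr (by norm_num)
  have hη' : η = D * (s2 * s1) / G := by
    rw [hη, hs1def, hs2def, Real.sqrt_mul (by norm_num : (0:ℝ) ≤ 2)]
  have hηp : 0 < η := by rw [hη']; positivity
  have hmemW : ∀ t, 1 ≤ t → w t ∈ W := by
    intro t ht
    obtain ⟨s, rfl⟩ := Nat.exists_eq_add_of_le ht
    rw [Nat.add_comm]
    exact hwmem s
  set a : ℕ → ℝ := fun t => ‖w t - wstar‖ ^ 2 with ha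
  have haD : ∀ t, 1 ≤ t → 0 ≤ a t ∧ a t ≤ D ^ 2 := fun t ht =>
    ⟨sq_nonneg _, pow_le_pow_left₀ (norm_nonneg _) (hdiam _ (hmemW t ht) _ hwstar) 2⟩
  have key : ∀ t ∈ Finset.Icc 1 T,
      f t (w t) - f t wstar ≤ (a t - a (t + 1)) / (2 * η) + η * G ^ 2 / 2 := by
    intro t ht
    obtain ⟨ht1, ht2⟩ := Finset.mem_Icc.mp ht
    set g := gradient (f t) (w t) with hgdef
    set p := w t - η • g with hp
    have hd1 : ‖w (t + 1) - wstar‖ ≤ ‖p - wstar‖ :=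
      proj_dist hWconv (hwmem t) hwstar (fun z hz => hproj t ht1 ht2 z hz)
    have hgle : ‖g‖ ≤ G := hgrad t ht (w t) (hmemW t ht1)
    have hexp : ‖p - wstar‖ ^ 2
        = ‖w t - wstar‖ ^ 2 - 2 * η * ⟪g, w t - wstar⟫ + η ^ 2 * ‖g‖ ^ 2 := by
      have h0 : p - wstar = (w t - wstar) - η • g := by rw [hp]; abel
      rw [h0, norm_sub_sq_real, real_inner_smul_right, norm_smul,
        real_inner_comm]
      simp [abs_of_pos hηp]
      ring
    have h4 : f t (w t) - f t wstar ≤ ⟪g, w t - wstar⟫ := by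
      have h6 := grad_ineq (hconv t ht) (hdiff t ht) (w t) wstar
      have h5 : ⟪g, w t - wstar⟫ = - ⟪g, wstar - w t⟫ := by
        rw [← inner_neg_right]; congr 1; abel
      rw [h5]; linarith
    have hsq : a (t + 1) ≤ ‖p - wstar‖ ^ 2 :=
      pow_le_pow_left₀ (norm_nonneg _) hd1 2
    have hA : 2 * η * ⟪g, w t - wstar⟫ ≤ (a t - a (t + 1)) + η ^ 2 * G ^ 2 := by
      have hgg : η ^ 2 * ‖g‖ ^ 2 ≤ η ^ 2 * G ^ 2 := by
        apply mul_le_mul_of_nonneg_left _ (sq_nonneg η)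
        exact pow_le_pow_left₀ (norm_nonneg _) hgle 2
      have hat : a t = ‖w t - wstar‖ ^ 2 := rfl
      nlinarith [hsq, hexp]
    have h2η : (0:ℝ) < 2 * η := by linarith
    have : ⟪g, w t - wstar⟫ ≤ ((a t - a (t + 1)) + η ^ 2 * G ^ 2) / (2 * η) := by
      rw [le_div_iff₀ h2η, mul_comm]
      exact hA
    have heq2 : ((a t - a (t + 1)) + η ^ 2 * G ^ 2) / (2 * η)
        = (a t - a (t + 1)) / (2 * η) + η * G ^ 2 / 2 := by
      field_simp
    linarith [h4, this, heq2.le]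
  calc ∑ t ∈ Finset.Icc 1 T, lam ^ (T - t) * f t (w t)
      - ∑ t ∈ Finset.Icc 1 T, lam ^ (T - t) * f t wstar
      = ∑ t ∈ Finset.Icc 1 T, lam ^ (T - t) * (f t (w t) - f t wstar) := by
        rw [← Finset.sum_sub_distrib]
        exact Finset.sum_congr rfl fun t _ => by ring
    _ ≤ ∑ t ∈ Finset.Icc 1 T,
        lam ^ (T - t) * ((a t - a (t + 1)) / (2 * η) + η * G ^ 2 / 2) := by
        apply Finset.sum_le_sum
        intro t ht
        exact mul_le_mul_of_nonneg_left (key t ht) (pow_nonneg hlam0.le _)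
    _ = (∑ t ∈ Finset.Icc 1 T, lam ^ (T - t) * (a t - a (t + 1))) / (2 * η)
        + (∑ t ∈ Finset.Icc 1 T, lam ^ (T - t)) * (η * G ^ 2 / 2) := by
        simp only [mul_add, ← mul_div_assoc]
        rw [Finset.sum_add_distrib, ← Finset.sum_div, ← Finset.sum_div, ← Finset.sum_mul, mul_div_assoc]
    _ ≤ D ^ 2 / (2 * η) + (1 / (1 - lam)) * (η * G ^ 2 / 2) := by
        have hS1 : ∑ t ∈ Finset.Icc 1 T, lam ^ (T - t) * (a t - a (t + 1)) ≤ D ^ 2 := by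
          have h := abel_aux lam (D ^ 2) hlam0.le hlam1.le a T (fun t h1 _ => haD t h1)
          linarith [(haD (T + 1) (by omega)).1]
        have hS2 := geo_aux lam hlam0.le hlam1 T
        gcongr
    _ ≤ D * G * s2 / s1 := by
        rw [hη', show (1:ℝ) - lam = s1 ^ 2 from hs1.symm]
        have hDne := hD.ne'
        have hGne := hG.ne'
        have hs1ne := hs1p.ne'
        have hs2ne := hs2p.ne'
        have key2 : D ^ 2 / (2 * (D * (s2 * s1) / G)) + 1 / s1 ^ 2 * (D * (s2 * s1) / G * G ^ 2 / 2)
            = D * G / (2 * s2 * s1) + D * G * s2 / (2 * s1) := by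
          field_simp
        rw [key2, div_add_div _ _ (by positivity) (by positivity),
          div_le_div_iff₀ (by positivity) hs1p]
        ring_nf
        nlinarith [hs2, hs1p, hs2p, hD, hG, mul_pos hD hG, mul_pos hs1p hs2p,
          mul_pos (mul_pos hD hG) (mul_pos hs1p hs1p),
          mul_pos (mul_pos (mul_pos hD hG) hs1p) hs1p]
end

section
/- Suppose Z ≤ 1/e, n ≥ max{8e, 16·ln(1/Z)} and U(n) ≥ 22. For any real bit sequence b_1,…,b_T with |b_t| ≤ 1 and ρ = 1 − 1/n, the discounted payoff of DNP-cu satisfies ∑_{t=1}^T ρ^{T−t}·g(x_t)·b_t ≥ ∑_{t=1}^T ρ^{T−t}·b_t − Z/(2(1−ρ)) − U(n) − 1. -/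
set_option maxHeartbeats 1000000


noncomputable def erf (x : ℝ) : ℝ := ∫ s in (0:ℝ)..x, Real.exp (-(s ^ 2) / 2)

noncomputable def gtilde (n Z x : ℝ) : ℝ :=
  Real.sqrt (n / 8) * Z * erf (x / Real.sqrt (8 * n)) * Real.exp (x ^ 2 / (16 * n))

/-- `g` is the projection of `g̃` onto `[0,1]`. -/
noncomputable def gfun (n Z x : ℝ) : ℝ := min (max (gtilde n Z x) 0) 1

lemma cont_integrand : Continuous (fun s : ℝ => Real.exp (-(s ^ 2) / 2)) := by
  continuity

lemma erf_nonneg {x : ℝ} (hx : 0 ≤ x) : 0 ≤ erf x :=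
  intervalIntegral.integral_nonneg hx (fun s _ => (Real.exp_pos _).le)

lemma erf_nonpos {x : ℝ} (hx : x ≤ 0) : erf x ≤ 0 := by
  have h : (0:ℝ) ≤ ∫ s in x..(0:ℝ), Real.exp (-(s ^ 2) / 2) :=
    intervalIntegral.integral_nonneg hx (fun s _ => (Real.exp_pos _).le)
  have h2 := intervalIntegral.integral_symm (μ := MeasureTheory.volume)
    (f := fun s : ℝ => Real.exp (-(s ^ 2) / 2)) x 0
  rw [erf]; rw [h2]; linarith

lemma erf_le {x : ℝ} (hx : 0 ≤ x) : erf x ≤ x := by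
  have h := intervalIntegral.integral_mono_on (μ := MeasureTheory.volume) hx
    (cont_integrand.intervalIntegrable 0 x)
    ((continuous_const : Continuous fun _ : ℝ => (1:ℝ)).intervalIntegrable 0 x)
    (fun s _ => by
      calc Real.exp (-(s ^ 2) / 2) ≤ Real.exp 0 := by
            apply Real.exp_le_exp.2; nlinarith [sq_nonneg s]
        _ = 1 := Real.exp_zero)
  simpa [erf] using h

lemma erf_ge_poly {x : ℝ} (hx : 0 ≤ x) : x - x ^ 3 / 6 ≤ erf x := by
  have h := intervalIntegral.integral_mono_on (μ := MeasureTheory.volume) hx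
    ((by continuity : Continuous fun s : ℝ => 1 - s ^ 2 / 2).intervalIntegrable 0 x)
    (cont_integrand.intervalIntegrable 0 x)
    (fun s _ => by
      have := Real.add_one_le_exp (-(s ^ 2) / 2)
      linarith)
  have h2 : ∫ s in (0:ℝ)..x, (1 - s ^ 2 / 2) = x - x ^ 3 / 6 := by
    have hd : ∀ s ∈ Set.uIcc (0:ℝ) x, HasDerivAt (fun u : ℝ => u - u ^ 3 / 6) (1 - s ^ 2 / 2) s := by
      intro s _
      have h1 : HasDerivAt (fun u : ℝ => u) 1 s := hasDerivAt_id s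
      have h3 : HasDerivAt (fun u : ℝ => u ^ 3 / 6) (3 * s ^ 2 / 6) s := by
        simpa using (hasDerivAt_pow 3 s).div_const 6
      have := h1.sub h3
      exact this.congr_deriv (by ring)
    rw [intervalIntegral.integral_eq_sub_of_hasDerivAt hd
      ((by continuity : Continuous fun s : ℝ => 1 - s ^ 2 / 2).intervalIntegrable 0 x)]
    ring
  rw [erf]; linarith

lemma hasDerivAt_erf (x : ℝ) : HasDerivAt erf (Real.exp (-(x ^ 2) / 2)) x :=
  (cont_integrand.integral_hasStrictDerivAt 0 x).hasDerivAt

lemma sq_div_sqrt8n {n : ℝ} (hn : 0 < n) (x : ℝ) :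
    (x / Real.sqrt (8 * n)) ^ 2 / 2 = x ^ 2 / (16 * n) := by
  rw [div_pow, Real.sq_sqrt (by linarith : (0:ℝ) ≤ 8 * n), div_div]
  ring_nf

lemma hasDerivAt_gtilde {n Z : ℝ} (hn : 0 < n) (x : ℝ) :
    HasDerivAt (gtilde n Z) (Z / 8 + x * gtilde n Z x / (8 * n)) x := by
  have hs : 0 < Real.sqrt (8 * n) := Real.sqrt_pos.2 (by linarith)
  have h1 : HasDerivAt (fun y : ℝ => erf (y / Real.sqrt (8 * n)))
      (Real.exp (-(x ^ 2) / (16 * n)) * (1 / Real.sqrt (8 * n))) x := by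
    have := (hasDerivAt_erf (x / Real.sqrt (8 * n))).comp x
      ((hasDerivAt_id x).div_const (Real.sqrt (8 * n)))
    refine this.congr_deriv ?_
    have he : -(x ^ 2) / (16 * n) = -((x / Real.sqrt (8 * n)) ^ 2) / 2 := by
      rw [neg_div, neg_div, sq_div_sqrt8n hn x]
    rw [he]
  have h2 : HasDerivAt (fun y : ℝ => Real.exp (y ^ 2 / (16 * n)))
      (Real.exp (x ^ 2 / (16 * n)) * (x / (8 * n))) x := by
    have hp : HasDerivAt (fun y : ℝ => y ^ 2 / (16 * n)) (x / (8 * n)) x := by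
      have := (hasDerivAt_pow 2 x).div_const (16 * n)
      refine this.congr_deriv ?_
      field_simp; ring
    exact hp.exp
  have h3 := ((h1.const_mul (Real.sqrt (n / 8) * Z)).mul h2)
  have key : HasDerivAt (gtilde n Z)
      (Real.sqrt (n / 8) * Z * (Real.exp (-(x ^ 2) / (16 * n)) * (1 / Real.sqrt (8 * n))) *
          Real.exp (x ^ 2 / (16 * n)) +
        Real.sqrt (n / 8) * Z * erf (x / Real.sqrt (8 * n)) *
          (Real.exp (x ^ 2 / (16 * n)) * (x / (8 * n)))) x := by
    exact h3
  convert key using 1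
  have hexp : Real.exp (-(x ^ 2) / (16 * n)) * Real.exp (x ^ 2 / (16 * n)) = 1 := by
    rw [← Real.exp_add]; ring_nf; exact Real.exp_zero
  have hsq : Real.sqrt (n / 8) * (1 / Real.sqrt (8 * n)) = 1 / 8 := by
    rw [one_div, ← Real.sqrt_inv, ← Real.sqrt_mul (by positivity)]
    rw [show n / 8 * (8 * n)⁻¹ = (1/8)^2 by field_simp, Real.sqrt_sq (by norm_num)]
  have : gtilde n Z x = Real.sqrt (n / 8) * Z * erf (x / Real.sqrt (8 * n)) *
      Real.exp (x ^ 2 / (16 * n)) := rfl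
  rw [this]
  linear_combination (-(Z * (Real.sqrt (n / 8) * (1 / Real.sqrt (8 * n))))) * hexp + (-Z) * hsq

lemma sqrt_ratio {n : ℝ} (hn : 0 < n) : Real.sqrt (n / 8) * (1 / Real.sqrt (8 * n)) = 1 / 8 := by
  rw [one_div, ← Real.sqrt_inv, ← Real.sqrt_mul (by positivity)]
  rw [show n / 8 * (8 * n)⁻¹ = (1/8)^2 by field_simp, Real.sqrt_sq (by norm_num)]

lemma gtilde_cont {n Z : ℝ} (hn : 0 < n) : Continuous (gtilde n Z) := by
  have : Differentiable ℝ (gtilde n Z) := fun x => (hasDerivAt_gtilde hn x).differentiableAt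
  exact this.continuous

lemma gtilde_zero (n Z : ℝ) : gtilde n Z 0 = 0 := by
  have : erf 0 = 0 := intervalIntegral.integral_same
  simp [gtilde, this]

lemma gtilde_nonneg {n Z x : ℝ} (hn : 0 < n) (hZ : 0 ≤ Z) (hx : 0 ≤ x) : 0 ≤ gtilde n Z x := by
  have h1 : 0 ≤ erf (x / Real.sqrt (8 * n)) := erf_nonneg (by positivity)
  have := Real.sqrt_nonneg (n / 8)
  have := (Real.exp_pos (x ^ 2 / (16 * n))).le
  rw [gtilde]; positivity

lemma gtilde_nonpos {n Z x : ℝ} (hn : 0 < n) (hZ : 0 ≤ Z) (hx : x ≤ 0) : gtilde n Z x ≤ 0 := by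
  have hs : 0 < Real.sqrt (8 * n) := Real.sqrt_pos.2 (by linarith)
  have h1 : erf (x / Real.sqrt (8 * n)) ≤ 0 := erf_nonpos (div_nonpos_of_nonpos_of_nonneg hx hs.le)
  have h2 : 0 ≤ Real.sqrt (n / 8) * Z := by positivity
  have h3 := (Real.exp_pos (x ^ 2 / (16 * n))).le
  rw [gtilde]
  apply mul_nonpos_of_nonpos_of_nonneg _ h3
  exact mul_nonpos_of_nonneg_of_nonpos h2 h1

lemma gtilde_deriv_cont {n Z : ℝ} (hn : 0 < n) :
    Continuous (fun s : ℝ => Z / 8 + s * gtilde n Z s / (8 * n)) := by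
  have := gtilde_cont (Z := Z) hn
  continuity

lemma gtilde_sub_eq_integral {n Z : ℝ} (hn : 0 < n) (α β : ℝ) :
    gtilde n Z β - gtilde n Z α = ∫ s in α..β, (Z / 8 + s * gtilde n Z s / (8 * n)) :=
  (intervalIntegral.integral_eq_sub_of_hasDerivAt
    (fun s _ => hasDerivAt_gtilde hn s)
    ((gtilde_deriv_cont hn).intervalIntegrable α β)).symm

lemma gtilde_mono {n Z α β : ℝ} (hn : 0 < n) (hZ : 0 ≤ Z) (h0 : 0 ≤ α) (hab : α ≤ β) :
    gtilde n Z α ≤ gtilde n Z β := by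
  have h := gtilde_sub_eq_integral (Z := Z) hn α β
  have hpos : (0:ℝ) ≤ ∫ s in α..β, (Z / 8 + s * gtilde n Z s / (8 * n)) := by
    apply intervalIntegral.integral_nonneg hab
    intro s hs
    have hs0 : 0 ≤ s := le_trans h0 hs.1
    have := gtilde_nonneg (Z := Z) hn hZ hs0
    positivity
  linarith

lemma gtilde_diff_le {n Z α β : ℝ} (hn : 0 < n) (hZ : 0 ≤ Z) (h0 : 0 ≤ α) (hab : α ≤ β) :
    gtilde n Z β - gtilde n Z α ≤ (β - α) * (Z / 8 + β * gtilde n Z β / (8 * n)) := by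
  rw [gtilde_sub_eq_integral hn α β]
  have hmono : ∀ s ∈ Set.Icc α β, (Z / 8 + s * gtilde n Z s / (8 * n)) ≤
      (Z / 8 + β * gtilde n Z β / (8 * n)) := by
    intro s hs
    have hs0 : 0 ≤ s := le_trans h0 hs.1
    have h1 : gtilde n Z s ≤ gtilde n Z β := gtilde_mono hn hZ hs0 hs.2
    have h2 : 0 ≤ gtilde n Z s := gtilde_nonneg hn hZ hs0
    have h3 : s * gtilde n Z s ≤ β * gtilde n Z β := by nlinarith [hs.2]
    have : 0 < 8 * n := by linarith
    gcongr
  calc ∫ s in α..β, (Z / 8 + s * gtilde n Z s / (8 * n))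
      ≤ ∫ _s in α..β, (Z / 8 + β * gtilde n Z β / (8 * n)) := by
        apply intervalIntegral.integral_mono_on hab
          ((gtilde_deriv_cont hn).intervalIntegrable α β)
          (intervalIntegrable_const) hmono
    _ = (β - α) * (Z / 8 + β * gtilde n Z β / (8 * n)) := by
        rw [intervalIntegral.integral_const, smul_eq_mul]

/-- Key pointwise self-bound: `g̃(x) ≤ x·g̃'(x)` for `x ≥ 0`. -/
lemma gtilde_le_x_deriv {n Z x : ℝ} (hn : 0 < n) (hZ : 0 ≤ Z) (hx : 0 ≤ x) :
    gtilde n Z x ≤ x * (Z / 8 + x * gtilde n Z x / (8 * n)) := by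
  have hs : 0 < Real.sqrt (8 * n) := Real.sqrt_pos.2 (by linarith)
  set a := x / Real.sqrt (8 * n) with ha
  have ha0 : 0 ≤ a := by positivity
  have ha2 : a ^ 2 = x ^ 2 / (8 * n) := by
    rw [ha, div_pow, Real.sq_sqrt (by linarith : (0:ℝ) ≤ 8 * n)]
  have hgx : gtilde n Z x = Real.sqrt (n / 8) * Z * erf a * Real.exp (x ^ 2 / (16 * n)) := rfl
  have hE : Real.exp (x ^ 2 / (16 * n)) = Real.exp (a ^ 2 / 2) := by
    rw [ha2]; ring_nf
  -- goal restated: gtilde x * (1 - x^2/(8n)) ≤ x * Z / 8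
  have hgoal : gtilde n Z x * (1 - a ^ 2) ≤ x * Z / 8 := by
    by_cases hcase : 1 ≤ a ^ 2
    · have h1 : 0 ≤ gtilde n Z x := gtilde_nonneg hn hZ hx
      have h2 : gtilde n Z x * (1 - a ^ 2) ≤ 0 :=
        mul_nonpos_of_nonneg_of_nonpos h1 (by linarith)
      have : 0 ≤ x * Z / 8 := by positivity
      linarith
    · push_neg at hcase
      have herf : erf a ≤ a := erf_le ha0
      have herf0 : 0 ≤ erf a := erf_nonneg ha0
      have hEpos := Real.exp_pos (a ^ 2 / 2)
      have hkey : Real.exp (a ^ 2 / 2) * (1 - a ^ 2) ≤ 1 := by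
        have h1 : 1 - a ^ 2 / 2 ≤ Real.exp (-(a ^ 2) / 2) := by
          have := Real.add_one_le_exp (-(a ^ 2) / 2)
          linarith
        have h2 : Real.exp (a ^ 2 / 2) * Real.exp (-(a ^ 2) / 2) = 1 := by
          rw [← Real.exp_add]; ring_nf; exact Real.exp_zero
        nlinarith [sq_nonneg a, hEpos]
      have hK : 0 ≤ Real.sqrt (n / 8) * Z := by positivity
      have hxa : Real.sqrt (n / 8) * Z * a = x * Z / 8 := by
        rw [ha]
        linear_combination (Z * x) * (sqrt_ratio hn)
      rw [hgx, hE]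
      calc Real.sqrt (n / 8) * Z * erf a * Real.exp (a ^ 2 / 2) * (1 - a ^ 2)
          = (Real.sqrt (n / 8) * Z) * (erf a * (Real.exp (a ^ 2 / 2) * (1 - a ^ 2))) := by ring
        _ ≤ (Real.sqrt (n / 8) * Z) * (a * 1) := by
            apply mul_le_mul_of_nonneg_left _ hK
            have h3 : erf a * (Real.exp (a ^ 2 / 2) * (1 - a ^ 2)) ≤ erf a * 1 := by
              apply mul_le_mul_of_nonneg_left hkey herf0
            have h4 : erf a * 1 ≤ a * 1 := by simpa using herf
            linarith
        _ = x * Z / 8 := by rw [mul_one]; exact hxa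
  have h8n : 0 < 8 * n := by linarith
  have := gtilde_nonneg (Z := Z) hn hZ hx
  rw [ha2] at hgoal
  have hexpand : x * (Z / 8 + x * gtilde n Z x / (8 * n)) =
      x * Z / 8 + gtilde n Z x * (x ^ 2 / (8 * n)) := by field_simp
  linarith [hgoal, hexpand]

noncomputable def Ffun (n Z x : ℝ) : ℝ := ∫ s in (0:ℝ)..x, (1 - gfun n Z s)

section gf

variable {n Z U : ℝ}

lemma gfun_nonneg (x : ℝ) : 0 ≤ gfun n Z x := le_min (le_max_right _ 0) zero_le_one

lemma gfun_le_one (x : ℝ) : gfun n Z x ≤ 1 := min_le_right _ _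

lemma gfun_of_nonpos (hn : 0 < n) (hZ : 0 ≤ Z) {x : ℝ} (hx : x ≤ 0) : gfun n Z x = 0 := by
  rw [gfun, max_eq_right (gtilde_nonpos hn hZ hx), min_eq_left zero_le_one]

lemma gfun_eq (hn : 0 < n) (hZ : 0 ≤ Z) (hU1 : gtilde n Z U = 1) {x : ℝ}
    (hx0 : 0 ≤ x) (hxU : x ≤ U) : gfun n Z x = gtilde n Z x := by
  have h1 : gtilde n Z x ≤ 1 := by
    have := gtilde_mono (Z := Z) hn hZ hx0 hxU
    linarith [hU1]
  rw [gfun, max_eq_left (gtilde_nonneg hn hZ hx0), min_eq_left h1]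

lemma gfun_of_ge (hn : 0 < n) (hZ : 0 ≤ Z) (hU0 : 0 ≤ U) (hU1 : gtilde n Z U = 1) {x : ℝ}
    (hx : U ≤ x) : gfun n Z x = 1 := by
  have h1 : 1 ≤ gtilde n Z x := by
    have := gtilde_mono (Z := Z) hn hZ hU0 hx
    linarith [hU1]
  rw [gfun, max_eq_left (by linarith), min_eq_right h1]

lemma gfun_mono (hn : 0 < n) (hZ : 0 ≤ Z) {a b : ℝ} (hab : a ≤ b) :
    gfun n Z a ≤ gfun n Z b := by
  rcases le_or_gt a 0 with h | h
  · rw [gfun_of_nonpos hn hZ h]; exact gfun_nonneg b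
  · have : gtilde n Z a ≤ gtilde n Z b := gtilde_mono hn hZ h.le hab
    exact min_le_min (max_le_max this le_rfl) le_rfl

lemma gfun_cont (hn : 0 < n) : Continuous (gfun n Z) :=
  ((gtilde_cont hn).max continuous_const).min continuous_const

lemma Fint_cont (hn : 0 < n) : Continuous (fun s : ℝ => 1 - gfun n Z s) :=
  continuous_const.sub (gfun_cont hn)

lemma Ffun_hasDerivAt (hn : 0 < n) (x : ℝ) :
    HasDerivAt (Ffun n Z) (1 - gfun n Z x) x :=
  ((Fint_cont hn).integral_hasStrictDerivAt 0 x).hasDerivAt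

lemma Ffun_zero : Ffun n Z 0 = 0 := intervalIntegral.integral_same

lemma Ffun_diff (hn : 0 < n) (a b : ℝ) :
    Ffun n Z b - Ffun n Z a = ∫ s in a..b, (1 - gfun n Z s) := by
  have h := intervalIntegral.integral_add_adjacent_intervals
    ((Fint_cont (Z := Z) hn).intervalIntegrable (μ := MeasureTheory.volume) 0 a)
    ((Fint_cont (Z := Z) hn).intervalIntegrable (μ := MeasureTheory.volume) a b)
  rw [Ffun, Ffun, ← h]; ring

lemma Ffun_diff_le (hn : 0 < n) (hZ : 0 ≤ Z) {a b : ℝ} (hab : a ≤ b) :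
    Ffun n Z b - Ffun n Z a ≤ (b - a) * (1 - gfun n Z a) := by
  rw [Ffun_diff hn a b]
  calc ∫ s in a..b, (1 - gfun n Z s) ≤ ∫ _s in a..b, (1 - gfun n Z a) := by
        apply intervalIntegral.integral_mono_on hab
          ((Fint_cont hn).intervalIntegrable a b) intervalIntegrable_const
        intro s hs
        have := gfun_mono (Z := Z) hn hZ hs.1
        linarith
    _ = (b - a) * (1 - gfun n Z a) := by
        rw [intervalIntegral.integral_const, smul_eq_mul]

lemma Ffun_diff_ge (hn : 0 < n) (hZ : 0 ≤ Z) {a b : ℝ} (hab : a ≤ b) :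
    (b - a) * (1 - gfun n Z b) ≤ Ffun n Z b - Ffun n Z a := by
  rw [Ffun_diff hn a b]
  calc (b - a) * (1 - gfun n Z b) = ∫ _s in a..b, (1 - gfun n Z b) := by
        rw [intervalIntegral.integral_const, smul_eq_mul]
    _ ≤ ∫ s in a..b, (1 - gfun n Z s) := by
        apply intervalIntegral.integral_mono_on (μ := MeasureTheory.volume) hab
          intervalIntegrable_const ((Fint_cont hn).intervalIntegrable a b)
        intro s hs
        have := gfun_mono (Z := Z) hn hZ hs.2
        linarith

lemma Ffun_le_self (hn : 0 < n) (hZ : 0 ≤ Z) {y : ℝ} (hy : 0 ≤ y) : Ffun n Z y ≤ y := by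
  have h := Ffun_diff_le (Z := Z) hn hZ hy
  rw [Ffun_zero, gfun_of_nonpos hn hZ le_rfl] at h
  linarith

lemma Ffun_eq_id (hn : 0 < n) (hZ : 0 ≤ Z) {y : ℝ} (hy : y ≤ 0) : Ffun n Z y = y := by
  have h1 := Ffun_diff_le (Z := Z) hn hZ hy
  have h2 := Ffun_diff_ge (Z := Z) hn hZ hy
  rw [Ffun_zero, gfun_of_nonpos hn hZ le_rfl, gfun_of_nonpos hn hZ hy] at *
  linarith

lemma Ffun_mono (hn : 0 < n) (hZ : 0 ≤ Z) {a b : ℝ} (hab : a ≤ b) :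
    Ffun n Z a ≤ Ffun n Z b := by
  have h := Ffun_diff_ge (Z := Z) hn hZ hab
  have h2 := gfun_le_one (n := n) (Z := Z) b
  nlinarith

lemma Ffun_nonneg (hn : 0 < n) (hZ : 0 ≤ Z) {y : ℝ} (hy : 0 ≤ y) : 0 ≤ Ffun n Z y := by
  have := Ffun_mono (Z := Z) hn hZ hy
  rw [Ffun_zero] at this; linarith

/-- `G(x) = x - F(x) ≤ x·g̃(x)/2` on `[0,U]`. -/
lemma G_le_half (hn : 0 < n) (hZ : 0 ≤ Z) (hU1 : gtilde n Z U = 1) {x : ℝ}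
    (hx0 : 0 ≤ x) (hxU : x ≤ U) : x - Ffun n Z x ≤ x * gtilde n Z x / 2 := by
  set H : ℝ → ℝ := fun s => s * gtilde n Z s - 2 * (s - Ffun n Z s) with hH
  have hd : ∀ s : ℝ, HasDerivAt H
      (gtilde n Z s + s * (Z / 8 + s * gtilde n Z s / (8 * n)) - 2 * (1 - (1 - gfun n Z s))) s := by
    intro s
    have h1 := (hasDerivAt_id s).mul (hasDerivAt_gtilde (Z := Z) hn s)
    have h2 := (hasDerivAt_id s).sub (Ffun_hasDerivAt (Z := Z) hn s)
    have h3 := h1.sub ((h2.const_mul 2))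
    refine h3.congr_deriv ?_
    simp only [id_eq]
    ring
  have hint : Continuous (fun s : ℝ =>
      gtilde n Z s + s * (Z / 8 + s * gtilde n Z s / (8 * n)) - 2 * (1 - (1 - gfun n Z s))) := by
    have := gtilde_cont (Z := Z) hn
    have := gfun_cont (Z := Z) hn
    continuity
  have heq := intervalIntegral.integral_eq_sub_of_hasDerivAt
    (f := H) (fun s _ => hd s) (hint.intervalIntegrable 0 x)
  have hpos : (0:ℝ) ≤ ∫ s in (0:ℝ)..x,
      (gtilde n Z s + s * (Z / 8 + s * gtilde n Z s / (8 * n)) - 2 * (1 - (1 - gfun n Z s))) := by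
    apply intervalIntegral.integral_nonneg hx0
    intro s hs
    have hs0 : 0 ≤ s := hs.1
    have hsU : s ≤ U := le_trans hs.2 hxU
    rw [gfun_eq hn hZ hU1 hs0 hsU]
    have := gtilde_le_x_deriv (Z := Z) hn hZ hs0
    linarith
  have hH0 : H 0 = 0 := by
    rw [hH]; simp [gtilde_zero, Ffun_zero]
  have hHx : H x = x * gtilde n Z x - 2 * (x - Ffun n Z x) := rfl
  rw [hH0, hHx] at heq
  linarith

lemma Ffun_U_ge (hn : 0 < n) (hZ : 0 ≤ Z) (hU0 : 0 ≤ U) (hU1 : gtilde n Z U = 1) :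
    U / 2 ≤ Ffun n Z U := by
  have := G_le_half (Z := Z) hn hZ hU1 hU0 le_rfl
  rw [hU1] at this; linarith

/-- chord bound near `U` : `1 - g̃(s) ≤ (U - s)(Z/8 + U/(8n))` for `0 ≤ s ≤ U`. -/
lemma chord (hn : 0 < n) (hZ : 0 ≤ Z) (hU1 : gtilde n Z U = 1) {s : ℝ}
    (hs0 : 0 ≤ s) (hsU : s ≤ U) : 1 - gtilde n Z s ≤ (U - s) * (Z / 8 + U / (8 * n)) := by
  have h := gtilde_diff_le (Z := Z) hn hZ hs0 hsU
  rw [hU1] at h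
  calc 1 - gtilde n Z s ≤ (U - s) * (Z / 8 + U * 1 / (8 * n)) := h
    _ = (U - s) * (Z / 8 + U / (8 * n)) := by ring

end gf

lemma erf_diff (a b : ℝ) : erf b - erf a = ∫ s in a..b, Real.exp (-(s ^ 2) / 2) := by
  have h := intervalIntegral.integral_add_adjacent_intervals
    (cont_integrand.intervalIntegrable (μ := MeasureTheory.volume) 0 a)
    (cont_integrand.intervalIntegrable (μ := MeasureTheory.volume) a b)
  rw [erf, erf, ← h]; ring

lemma erf_mono {a b : ℝ} (hab : a ≤ b) : erf a ≤ erf b := by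
  have h := erf_diff a b
  have : (0:ℝ) ≤ ∫ s in a..b, Real.exp (-(s ^ 2) / 2) :=
    intervalIntegral.integral_nonneg hab (fun s _ => (Real.exp_pos _).le)
  linarith

/-- `U ≤ n` under the theorem's hypotheses. -/
lemma U_le_n {n Z U : ℝ} (hn1 : 1 ≤ n) (hZpos : 0 < Z)
    (hne : 8 * Real.exp 1 ≤ n) (hnl : 16 * Real.log (1 / Z) ≤ n)
    (hU0 : 0 ≤ U) (hU1 : gtilde n Z U = 1) : U ≤ n := by
  have hn0 : 0 < n := by linarith
  have hgn : (13:ℝ)/10 ≤ gtilde n Z n := by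
    have harg : n / Real.sqrt (8 * n) = Real.sqrt (n / 8) := by
      have hs : 0 < Real.sqrt (8 * n) := Real.sqrt_pos.2 (by linarith)
      rw [eq_comm, eq_div_iff (ne_of_gt hs), ← Real.sqrt_mul (by positivity) (8 * n),
        show n / 8 * (8 * n) = n ^ 2 by ring, Real.sqrt_sq hn0.le]
    have hexp : n ^ 2 / (16 * n) = n / 16 := by field_simp
    have hZE : 1 ≤ Z * Real.exp (n / 16) := by
      have h1 : Real.log (1 / Z) ≤ n / 16 := by linarith
      have h2 : Real.exp (Real.log (1 / Z)) ≤ Real.exp (n / 16) := Real.exp_le_exp.2 h1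
      rw [Real.exp_log (by positivity)] at h2
      have h3 : Z * (1 / Z) = 1 := by field_simp
      nlinarith [mul_le_mul_of_nonneg_left h2 hZpos.le]
    have hsq : (8:ℝ)/5 ≤ Real.sqrt (n / 8) := by
      have he : (2689:ℝ)/1000 ≤ Real.exp 1 := by
        have := Real.exp_one_gt_d9; linarith
      have : (8:ℝ)/5 = Real.sqrt ((8/5)^2) := (Real.sqrt_sq (by norm_num)).symm
      rw [this]
      apply Real.sqrt_le_sqrt
      nlinarith
    have herf : (5:ℝ)/6 ≤ erf (Real.sqrt (n / 8)) := by
      have h1 : (1:ℝ) ≤ Real.sqrt (n / 8) := by linarith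
      have h2 := erf_mono h1
      have h3 := erf_ge_poly (by norm_num : (0:ℝ) ≤ 1)
      norm_num at h3
      linarith
    have hEpos : (0:ℝ) < Real.exp (n / 16) := Real.exp_pos _
    have herfpos : 0 ≤ erf (Real.sqrt (n / 8)) := erf_nonneg (by positivity)
    rw [gtilde, harg, hexp]
    nlinarith [mul_le_mul hsq herf (by norm_num) (by positivity),
      mul_le_mul_of_nonneg_left hZE (show (0:ℝ) ≤ (8/5)*(5/6) by norm_num)]
  by_contra hcon
  push_neg at hcon
  have := gtilde_mono (Z := Z) hn0 hZpos.le hn0.le hcon.le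
  rw [hU1] at this
  linarith

lemma gtilde_one_le {n Z : ℝ} (hn1 : 1 ≤ n) (hZpos : 0 < Z) :
    gtilde n Z 1 ≤ 3 * Z / 8 := by
  have hn0 : 0 < n := by linarith
  have hs : 0 < Real.sqrt (8 * n) := Real.sqrt_pos.2 (by linarith)
  have herf : erf (1 / Real.sqrt (8 * n)) ≤ 1 / Real.sqrt (8 * n) := erf_le (by positivity)
  have herf0 : 0 ≤ erf (1 / Real.sqrt (8 * n)) := erf_nonneg (by positivity)
  have hE : Real.exp (1 ^ 2 / (16 * n)) ≤ 3 := by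
    calc Real.exp (1 ^ 2 / (16 * n)) ≤ Real.exp 1 := by
          apply Real.exp_le_exp.2
          rw [one_pow, div_le_one (by linarith)]
          linarith
      _ ≤ 3 := by have := Real.exp_one_lt_d9; linarith
  have hE0 : 0 < Real.exp (1 ^ 2 / (16 * n)) := Real.exp_pos _
  have hK : 0 ≤ Real.sqrt (n / 8) * Z := by positivity
  have h1 : Real.sqrt (n / 8) * Z * erf (1 / Real.sqrt (8 * n)) ≤
      Real.sqrt (n / 8) * Z * (1 / Real.sqrt (8 * n)) :=
    mul_le_mul_of_nonneg_left herf hK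
  have h2 : Real.sqrt (n / 8) * Z * (1 / Real.sqrt (8 * n)) = Z / 8 := by
    linear_combination Z * sqrt_ratio hn0
  rw [gtilde]
  have h3 : Real.sqrt (n / 8) * Z * erf (1 / Real.sqrt (8 * n)) ≤ Z / 8 := by linarith
  have h4 : 0 ≤ Real.sqrt (n / 8) * Z * erf (1 / Real.sqrt (8 * n)) := by positivity
  nlinarith

lemma gtilde_two_le {n Z : ℝ} (hn1 : 1 ≤ n) (hZpos : 0 < Z) :
    gtilde n Z 2 ≤ Z := by
  have hn0 : 0 < n := by linarith
  have hs : 0 < Real.sqrt (8 * n) := Real.sqrt_pos.2 (by linarith)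
  have herf : erf (2 / Real.sqrt (8 * n)) ≤ 2 / Real.sqrt (8 * n) := erf_le (by positivity)
  have herf0 : 0 ≤ erf (2 / Real.sqrt (8 * n)) := erf_nonneg (by positivity)
  have hE : Real.exp (2 ^ 2 / (16 * n)) ≤ 3 := by
    calc Real.exp (2 ^ 2 / (16 * n)) ≤ Real.exp 1 := by
          apply Real.exp_le_exp.2
          rw [div_le_one (by linarith)]
          linarith
      _ ≤ 3 := by have := Real.exp_one_lt_d9; linarith
  have hE0 : 0 < Real.exp (2 ^ 2 / (16 * n)) := Real.exp_pos _
  have hK : 0 ≤ Real.sqrt (n / 8) * Z := by positivity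
  have h1 : Real.sqrt (n / 8) * Z * erf (2 / Real.sqrt (8 * n)) ≤
      Real.sqrt (n / 8) * Z * (2 / Real.sqrt (8 * n)) :=
    mul_le_mul_of_nonneg_left herf hK
  have h2 : Real.sqrt (n / 8) * Z * (2 / Real.sqrt (8 * n)) = Z / 4 := by
    linear_combination 2 * Z * sqrt_ratio hn0
  rw [gtilde]
  have h3 : Real.sqrt (n / 8) * Z * erf (2 / Real.sqrt (8 * n)) ≤ Z / 4 := by linarith
  have h4 : 0 ≤ Real.sqrt (n / 8) * Z * erf (2 / Real.sqrt (8 * n)) := by positivity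
  nlinarith

section arith
/-- clean-context arithmetic: case `1 ≤ x`. -/
lemma arith1 {n x A B Z : ℝ} (hn21 : 21 ≤ n) (h1x : 1 ≤ x) (hxn : x ≤ n)
    (hA0 : 0 ≤ A) (hB0 : 0 ≤ B) (hZ0 : 0 ≤ Z)
    (hq1m : 8 * n * (B - A) ≤ n * Z + (x + 1) * B) :
    (x + 1) * B ≤ 4 * x * A + 3 * n * Z := by
  have hn0 : (0:ℝ) < n := by linarith
  have hden : (0:ℝ) < 8 * n - (x + 1) := by linarith
  have h' : B * (8 * n - (x + 1)) ≤ 8 * n * A + n * Z := by linarith [hq1m]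
  apply le_of_mul_le_mul_right _ hden
  calc (x + 1) * B * (8 * n - (x + 1)) = (x + 1) * (B * (8 * n - (x + 1))) := by ring
    _ ≤ (x + 1) * (8 * n * A + n * Z) :=
        mul_le_mul_of_nonneg_left h' (by linarith)
    _ ≤ (4 * x * A + 3 * n * Z) * (8 * n - (x + 1)) := by
        nlinarith [mul_nonneg (mul_nonneg hn0.le hA0) (show (0:ℝ) ≤ x - 1 by linarith),
          mul_nonneg (mul_nonneg (show (0:ℝ) ≤ x by linarith) hA0)
            (show (0:ℝ) ≤ n - x by linarith),
          mul_nonneg (mul_nonneg hn0.le hZ0) (show (0:ℝ) ≤ n - x by linarith),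
          mul_nonneg (mul_nonneg hn0.le hZ0) (show (0:ℝ) ≤ n - 1 by linarith)]

/-- clean-context arithmetic: case `x < 1`. -/
lemma arith2 {n x A B Z : ℝ} (hn1 : 1 ≤ n) (hx0 : 0 ≤ x) (h1x : x ≤ 1)
    (hA0 : 0 ≤ A) (hB0 : 0 ≤ B) (hBZ : B ≤ Z) (hZ0 : 0 ≤ Z) :
    (x + 1) * B ≤ 4 * x * A + 3 * n * Z := by
  nlinarith [mul_nonneg hx0 hA0, mul_nonneg (show (0:ℝ) ≤ 1 - x by linarith) hB0,
    mul_nonneg (show (0:ℝ) ≤ n - 1 by linarith) hZ0]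

/-- clean-context: the key curvature bound, `c ≥ 0`. -/
lemma arith3 {n x c A g2 gf2 B Z : ℝ} (hn0 : 0 < n) (hx0 : 0 ≤ x)
    (hc0 : 0 ≤ c) (hc1 : c ≤ 1) (hgf2g2 : gf2 ≤ g2) (hg20 : 0 ≤ g2) (hg2B : g2 ≤ B)
    (hB0 : 0 ≤ B) (hZ0 : 0 ≤ Z)
    (h2m : 8 * n * (g2 - A) ≤ c * (n * Z + (x + c) * g2))
    (he1 : (x + 1) * B ≤ 4 * x * A + 3 * n * Z) :
    n * (c * (gf2 - A)) ≤ x * A / 2 + n * Z / 2 := by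
  have hQ0 : 0 ≤ n * Z + (x + c) * g2 :=
    add_nonneg (mul_nonneg hn0.le hZ0) (mul_nonneg (by linarith) hg20)
  have s3 : (x + c) * g2 ≤ (x + 1) * B := by
    nlinarith [mul_nonneg (show (0:ℝ) ≤ 1 - c by linarith) hg20,
      mul_nonneg (show (0:ℝ) ≤ x + 1 by linarith) (show (0:ℝ) ≤ B - g2 by linarith)]
  have t2 : c * (c * (n * Z + (x + c) * g2)) ≤ n * Z + (x + 1) * B := by
    nlinarith [mul_nonneg (show (0:ℝ) ≤ 1 - c * c by nlinarith) hQ0, s3]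
  have t1 := mul_le_mul_of_nonneg_left h2m hc0
  have s1 : c * (gf2 - A) ≤ c * (g2 - A) :=
    mul_le_mul_of_nonneg_left (by linarith) hc0
  have s2 := mul_le_mul_of_nonneg_left s1 hn0.le
  linarith

/-- clean-context: the key curvature bound, `c < 0`. -/
lemma arith4 {n x c m A gm Z : ℝ} (hn0 : 0 < n) (hx0 : 0 ≤ x) (hA0 : 0 ≤ A)
    (hc0 : c < 0) (hrc2 : -c ≤ 2) (hxm0 : 0 ≤ x - m) (hrm : x - m ≤ -c)
    (hdm0 : 0 ≤ A - gm) (hZ0 : 0 ≤ Z)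
    (hdm_m : 8 * n * (A - gm) ≤ (x - m) * (n * Z + x * A)) :
    n * (c * (gm - A)) ≤ x * A / 2 + n * Z / 2 := by
  have hP0 : 0 ≤ n * Z + x * A := add_nonneg (mul_nonneg hn0.le hZ0) (mul_nonneg hx0 hA0)
  have t1 := mul_le_mul_of_nonneg_left hdm_m (show (0:ℝ) ≤ -c by linarith)
  have t0 : (-c) * (x - m) ≤ 4 := by nlinarith
  have t2 : (-c) * ((x - m) * (n * Z + x * A)) ≤ 4 * (n * Z + x * A) := by
    nlinarith [mul_le_mul_of_nonneg_right t0 hP0]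
  have he : n * (c * (gm - A)) = (-c) * (8 * n * (A - gm)) / 8 := by ring
  linarith [t1, t2, he.le, he.ge]

/-- clean-context: final combination. -/
lemma arith5 {n b c x A gf2 F1 F2 ρ Z : ℝ}
    (hmain : n * (c * (1 - gf2)) ≤ n * (F2 - F1))
    (hstar : n * (c * (gf2 - A)) ≤ x * A / 2 + n * Z / 2)
    (hF : x - x * A / 2 ≤ F1)
    (hρF1 : n * (ρ * F1) = (n - 1) * F1)
    (hnc : n * c = n * b - x)
    (hncA : A * (n * c) = A * (n * b) - A * x) :
    n * ((1 - A) * b) ≤ n * (F2 - ρ * F1 + Z / 2) := by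
  nlinarith [hmain, hstar, hF, hρF1, hnc, hncA]
end arith

section step
variable {n Z U : ℝ}

/-- The one-step potential inequality. -/
lemma step_ineq (hn1 : 1 ≤ n) (hn21 : 21 ≤ n) (hZpos : 0 < Z) (hZ1 : Z ≤ 1)
    (hU0 : 0 ≤ U) (hU1 : gtilde n Z U = 1) (hU22 : 22 ≤ U) (hUn : U ≤ n)
    {x b ρ : ℝ} (hρ : ρ = 1 - 1 / n) (hx : -1 ≤ x) (hxU : x ≤ U + 1) (hb : |b| ≤ 1) :
    (1 - gfun n Z x) * b ≤
      Ffun n Z (if (0 ≤ x ∧ x ≤ U) ∨ (x < 0 ∧ 0 < b) ∨ (U < x ∧ b < 0)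
        then ρ * x + b else ρ * x) - ρ * Ffun n Z x + Z / 2 := by
  have hn0 : 0 < n := by linarith
  have hn' : n ≠ 0 := ne_of_gt hn0
  have hZ0 : 0 ≤ Z := hZpos.le
  obtain ⟨hb1, hb2⟩ := abs_le.1 hb
  have hinv : (1:ℝ) / n ≤ 1 / 21 := one_div_le_one_div_of_le (by norm_num) hn21
  have hinv0 : (0:ℝ) < 1 / n := by positivity
  have hρ0 : 0 < ρ := by rw [hρ]; linarith
  have hρ1 : ρ < 1 := by rw [hρ]; linarith
  have hg1 := gtilde_one_le (Z := Z) hn1 hZpos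
  rcases lt_trichotomy x 0 with hx0 | hx0 | hx0
  · -- x < 0
    rw [gfun_of_nonpos hn0 hZ0 hx0.le, Ffun_eq_id hn0 hZ0 hx0.le]
    have hρx : ρ * x ≤ 0 := mul_nonpos_of_nonneg_of_nonpos hρ0.le hx0.le
    rcases lt_or_ge 0 b with hbpos | hbneg
    · rw [if_pos (Or.inr (Or.inl ⟨hx0, hbpos⟩))]
      have hy1 : ρ * x + b ≤ 1 := by linarith
      have hkey : ρ * x + b - 3 * Z / 8 ≤ Ffun n Z (ρ * x + b) := by
        rcases le_or_gt (ρ * x + b) 0 with h | h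
        · rw [Ffun_eq_id hn0 hZ0 h]; linarith
        · have hgy : gfun n Z (ρ * x + b) ≤ 3 * Z / 8 := by
            calc gfun n Z (ρ * x + b) ≤ gfun n Z 1 := gfun_mono hn0 hZ0 hy1
              _ ≤ max (gtilde n Z 1) 0 := min_le_left _ _
              _ ≤ 3 * Z / 8 := max_le hg1 (by positivity)
          have hdg := Ffun_diff_ge (Z := Z) hn0 hZ0 h.le
          rw [Ffun_zero] at hdg
          have hg0 := gfun_nonneg (n := n) (Z := Z) (ρ * x + b)
          have hprod : (ρ * x + b) * gfun n Z (ρ * x + b) ≤ 3 * Z / 8 := by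
            linarith [mul_nonneg (show (0:ℝ) ≤ 1 - (ρ * x + b) by linarith) hg0]
          linarith [hdg, hprod]
      linarith
    · have hcond : ¬((0 ≤ x ∧ x ≤ U) ∨ (x < 0 ∧ 0 < b) ∨ (U < x ∧ b < 0)) := by
        push_neg
        exact ⟨fun h => absurd h (not_le.2 hx0), fun _ => hbneg,
          fun h => absurd h (not_lt.2 (by linarith))⟩
      rw [if_neg hcond, Ffun_eq_id hn0 hZ0 hρx]
      linarith
  · -- x = 0
    subst hx0
    rw [if_pos (Or.inl ⟨le_rfl, hU0⟩)]
    rw [gfun_of_nonpos hn0 hZ0 le_rfl, Ffun_zero]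
    rw [mul_zero, zero_add, sub_zero]
    have hkey : b - 3 * Z / 8 ≤ Ffun n Z b := by
      rcases le_or_gt b 0 with h | h
      · rw [Ffun_eq_id hn0 hZ0 h]; linarith
      · have hgy : gfun n Z b ≤ 3 * Z / 8 := by
          calc gfun n Z b ≤ gfun n Z 1 := gfun_mono hn0 hZ0 hb2
            _ ≤ max (gtilde n Z 1) 0 := min_le_left _ _
            _ ≤ 3 * Z / 8 := max_le hg1 (by positivity)
        have hdg := Ffun_diff_ge (Z := Z) hn0 hZ0 h.le
        rw [Ffun_zero] at hdg
        have hg0 := gfun_nonneg (n := n) (Z := Z) b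
        have hprod : b * gfun n Z b ≤ 3 * Z / 8 := by
          linarith [mul_nonneg (show (0:ℝ) ≤ 1 - b by linarith) hg0]
        linarith [hdg, hprod]
    linarith
  · -- 0 < x
    rcases le_or_gt x U with hxle | hxgt
    · -- 0 < x ≤ U : main case
      rw [if_pos (Or.inl ⟨hx0.le, hxle⟩)]
      set c := b - x / n with hc
      have hxc : ρ * x + b = x + c := by rw [hρ, hc]; ring
      rw [hxc]
      set A := gtilde n Z x with hA
      have hgx : gfun n Z x = A := gfun_eq hn0 hZ0 hU1 hx0.le hxle
      rw [hgx]
      set F1 := Ffun n Z x with hF1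
      set F2 := Ffun n Z (x + c) with hF2
      set gf2 := gfun n Z (x + c) with hgf2
      have hA0 : 0 ≤ A := gtilde_nonneg hn0 hZ0 hx0.le
      have hA1 : A ≤ 1 := by
        have := gtilde_mono (Z := Z) hn0 hZ0 hx0.le hxle; rw [hU1] at this; linarith
      have hxn : x / n ≤ 1 := by rw [div_le_one hn0]; linarith
      have hxn0 : 0 ≤ x / n := by positivity
      have hnc : n * c = n * b - x := by rw [hc]; field_simp
      have hncA : A * (n * c) = A * (n * b) - A * x := by linear_combination A * hnc
      have hρF1 : n * (ρ * F1) = (n - 1) * F1 := by rw [hρ]; field_simp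
      have hF : x - x * A / 2 ≤ F1 := by
        have := G_le_half (Z := Z) hn0 hZ0 hU1 hx0.le hxle
        rw [← hA, ← hF1] at this; linarith
      have hgf20 : 0 ≤ gf2 := gfun_nonneg _
      apply le_of_mul_le_mul_left _ hn0
      rcases le_or_gt 0 c with hcpos | hcneg
      · -- c ≥ 0
        have hcb : c ≤ b := by rw [hc]; linarith
        have hc1 : c ≤ 1 := le_trans hcb hb2
        set g2 := gtilde n Z (x + c) with hg2
        set B := gtilde n Z (x + 1) with hB
        have hB0 : 0 ≤ B := gtilde_nonneg hn0 hZ0 (by linarith)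
        have hg20 : 0 ≤ g2 := gtilde_nonneg hn0 hZ0 (by linarith)
        have hg2B : g2 ≤ B := gtilde_mono hn0 hZ0 (by linarith) (by linarith)
        have hgf2g2 : gf2 ≤ g2 := by
          rw [hgf2, gfun]
          calc min (max (gtilde n Z (x+c)) 0) 1 ≤ max (gtilde n Z (x+c)) 0 := min_le_left _ _
            _ = g2 := max_eq_left hg20
        have h2m : 8 * n * (g2 - A) ≤ c * (n * Z + (x + c) * g2) := by
          have h2 := gtilde_diff_le (Z := Z) hn0 hZ0 hx0.le (by linarith : x ≤ x + c)
          rw [← hA, ← hg2] at h2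
          have h2' := mul_le_mul_of_nonneg_left h2 (show (0:ℝ) ≤ 8 * n by linarith)
          have heq : 8 * n * ((x + c - x) * (Z / 8 + (x + c) * g2 / (8 * n))) =
              c * (n * Z + (x + c) * g2) := by field_simp; ring
          rw [heq] at h2'; exact h2'
        have hq1m : 8 * n * (B - A) ≤ n * Z + (x + 1) * B := by
          have h2 := gtilde_diff_le (Z := Z) hn0 hZ0 hx0.le (by linarith : x ≤ x + 1)
          rw [← hA, ← hB] at h2
          have h2' := mul_le_mul_of_nonneg_left h2 (show (0:ℝ) ≤ 8 * n by linarith)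
          have heq : 8 * n * ((x + 1 - x) * (Z / 8 + (x + 1) * B / (8 * n))) =
              n * Z + (x + 1) * B := by field_simp; ring
          rw [heq] at h2'; exact h2'
        have e1 : (x + 1) * B ≤ 4 * x * A + 3 * n * Z := by
          rcases le_or_gt 1 x with h1x | h1x
          · exact arith1 hn21 h1x (by linarith) hA0 hB0 hZ0 hq1m
          · have hB2 : B ≤ gtilde n Z 2 := gtilde_mono hn0 hZ0 (by linarith) (by linarith)
            have hg2le := gtilde_two_le (Z := Z) hn1 hZpos
            exact arith2 hn1 hx0.le h1x.le hA0 hB0 (by linarith) hZ0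
        have star : n * (c * (gf2 - A)) ≤ x * A / 2 + n * Z / 2 :=
          arith3 hn0 hx0.le hcpos hc1 hgf2g2 hg20 hg2B hB0 hZ0 h2m e1
        have f4 : (x + c - x) * (1 - gf2) ≤ F2 - F1 :=
          Ffun_diff_ge hn0 hZ0 (by linarith : x ≤ x + c)
        have f4n := mul_le_mul_of_nonneg_left f4 hn0.le
        have hmain : n * (c * (1 - gf2)) ≤ n * (F2 - F1) := by linarith [f4n]
        exact arith5 hmain star hF hρF1 hnc hncA
      · -- c < 0
        set m := max (x + c) 0 with hm
        have hm0 : 0 ≤ m := le_max_right _ _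
        have hmx : m ≤ x := max_le (by linarith) hx0.le
        have hgm : gf2 = gtilde n Z m := by
          rcases le_or_gt 0 (x + c) with h | h
          · have hmeq : m = x + c := by rw [hm]; exact max_eq_left h
            rw [hgf2, hmeq]
            exact gfun_eq hn0 hZ0 hU1 h (by linarith)
          · have hmeq : m = 0 := by rw [hm]; exact max_eq_right h.le
            rw [hgf2, hmeq, gtilde_zero]
            exact gfun_of_nonpos hn0 hZ0 h.le
        have hdm_m : 8 * n * (A - gtilde n Z m) ≤ (x - m) * (n * Z + x * A) := by
          have h2 := gtilde_diff_le (Z := Z) hn0 hZ0 hm0 hmx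
          rw [← hA] at h2
          have h2' := mul_le_mul_of_nonneg_left h2 (show (0:ℝ) ≤ 8 * n by linarith)
          have heq : 8 * n * ((x - m) * (Z / 8 + x * A / (8 * n))) =
              (x - m) * (n * Z + x * A) := by field_simp
          rw [heq] at h2'; exact h2'
        have hdm0 : 0 ≤ A - gtilde n Z m := by
          have := gtilde_mono (Z := Z) hn0 hZ0 hm0 hmx
          rw [← hA] at this; linarith
        have hrm : x - m ≤ -c := by
          have : x + c ≤ m := le_max_left _ _
          linarith
        have hxm0 : 0 ≤ x - m := by linarith
        have hrc2 : -c ≤ 2 := by rw [hc]; linarith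
        have star : n * (c * (gf2 - A)) ≤ x * A / 2 + n * Z / 2 := by
          rw [hgm]
          exact arith4 hn0 hx0.le hA0 hcneg hrc2 hxm0 hrm hdm0 hZ0 hdm_m
        have f4 : F1 - F2 ≤ (x - (x + c)) * (1 - gf2) :=
          Ffun_diff_le hn0 hZ0 (by linarith : x + c ≤ x)
        have f4n' := mul_le_mul_of_nonneg_left f4 hn0.le
        have hmain : n * (c * (1 - gf2)) ≤ n * (F2 - F1) := by linarith [f4n']
        exact arith5 hmain star hF hρF1 hnc hncA
    · -- U < x
      rw [gfun_of_ge hn0 hZ0 hU0 hU1 hxgt.le]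
      have hFeqU : ∀ y : ℝ, U ≤ y → Ffun n Z y = Ffun n Z U := by
        intro y hy
        have h1 := Ffun_diff_le (Z := Z) hn0 hZ0 hy
        have h2 := Ffun_diff_ge (Z := Z) hn0 hZ0 hy
        rw [gfun_of_ge hn0 hZ0 hU0 hU1 le_rfl] at h1
        rw [gfun_of_ge hn0 hZ0 hU0 hU1 hy] at h2
        have e : (y - U) * (1 - 1) = 0 := by ring
        rw [e] at h1 h2
        linarith
      have hFxU : Ffun n Z x = Ffun n Z U := hFeqU x hxgt.le
      have hUn2 : U / n ≤ 1 := by rw [div_le_one hn0]; linarith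
      have hFU2 : U / 2 ≤ Ffun n Z U := Ffun_U_ge hn0 hZ0 hU0 hU1
      have hFU0 : 0 ≤ Ffun n Z U := by linarith
      have key : ∀ x' : ℝ, ρ * U - 1 ≤ x' →
          ρ * Ffun n Z U - Ffun n Z x' ≤ Z / 2 := by
        intro x' hx'
        rcases le_or_gt U x' with h | h
        · rw [hFeqU x' h]
          linarith [mul_nonneg (show (0:ℝ) ≤ 1 - ρ by linarith) hFU0]
        · have hρU : ρ * U = U - U / n := by rw [hρ]; ring
          rw [hρU] at hx'
          have hx'0 : 0 ≤ x' := by linarith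
          have hUx' : U - x' ≤ U / n + 1 := by linarith
          have hUx'2 : U - x' ≤ 2 := by linarith
          have hFdiff : Ffun n Z U - Ffun n Z x' ≤
              (U - x') * ((U - x') * (Z / 8 + U / (8 * n))) := by
            rw [Ffun_diff hn0 x' U]
            calc ∫ s in x'..U, (1 - gfun n Z s)
                ≤ ∫ _s in x'..U, ((U - x') * (Z / 8 + U / (8 * n))) := by
                  apply intervalIntegral.integral_mono_on (μ := MeasureTheory.volume) h.le
                    ((Fint_cont hn0).intervalIntegrable x' U) intervalIntegrable_const
                  intro s hs
                  have hs0 : 0 ≤ s := le_trans hx'0 hs.1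
                  rw [gfun_eq hn0 hZ0 hU1 hs0 hs.2]
                  have hch := chord (Z := Z) hn0 hZ0 hU1 hs0 hs.2
                  have : (U - s) * (Z / 8 + U / (8 * n)) ≤ (U - x') * (Z / 8 + U / (8 * n)) := by
                    apply mul_le_mul_of_nonneg_right (by linarith [hs.1]) (by positivity)
                  linarith
              _ = (U - x') * ((U - x') * (Z / 8 + U / (8 * n))) := by
                  rw [intervalIntegral.integral_const, smul_eq_mul]
          have hsq : (U - x') * (U - x') ≤ 4 := by
            have h4 := mul_le_mul hUx'2 hUx'2 (by linarith) (by norm_num)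
            linarith
          have hquad : (U - x') * ((U - x') * (Z / 8 + U / (8 * n))) ≤
              Z / 2 + U / (2 * n) := by
            have h2 : (0:ℝ) ≤ Z / 8 + U / (8 * n) := by positivity
            have h3 := mul_le_mul_of_nonneg_right hsq h2
            calc (U - x') * ((U - x') * (Z / 8 + U / (8 * n)))
                = (U - x') * (U - x') * (Z / 8 + U / (8 * n)) := by ring
              _ ≤ 4 * (Z / 8 + U / (8 * n)) := h3
              _ = Z / 2 + U / (2 * n) := by ring
          have hUF : U / (2 * n) ≤ Ffun n Z U / n := by
            rw [div_le_div_iff₀ (by linarith) hn0]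
            linarith [mul_le_mul_of_nonneg_right hFU2 hn0.le]
          have hρFU : ρ * Ffun n Z U = Ffun n Z U - Ffun n Z U / n := by
            rw [hρ]; ring
          linarith
      rcases lt_or_ge b 0 with hbneg | hbpos
      · rw [if_pos (Or.inr (Or.inr ⟨hxgt, hbneg⟩))]
        have hρUx : ρ * U ≤ ρ * x := mul_le_mul_of_nonneg_left hxgt.le hρ0.le
        have := key (ρ * x + b) (by linarith)
        rw [hFxU]
        linarith
      · have hcond : ¬((0 ≤ x ∧ x ≤ U) ∨ (x < 0 ∧ 0 < b) ∨ (U < x ∧ b < 0)) := by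
          push_neg
          exact ⟨fun _ => hxgt,
            fun h => absurd h (not_lt.2 (by linarith)), fun _ => hbpos⟩
        rw [if_neg hcond]
        have hρUx : ρ * U ≤ ρ * x := mul_le_mul_of_nonneg_left hxgt.le hρ0.le
        have := key (ρ * x) (by linarith)
        rw [hFxU]
        linarith

end step

/-- the deviation stays in `[-1, U+1]`. -/
lemma range_step {n U ρ x b : ℝ} (hn21 : 21 ≤ n) (hUn : U ≤ n) (hU22 : 22 ≤ U)
    (hρ : ρ = 1 - 1 / n) (hx1 : -1 ≤ x) (hx2 : x ≤ U + 1) (hb : |b| ≤ 1) :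
    -1 ≤ (if (0 ≤ x ∧ x ≤ U) ∨ (x < 0 ∧ 0 < b) ∨ (U < x ∧ b < 0) then ρ * x + b else ρ * x) ∧
    (if (0 ≤ x ∧ x ≤ U) ∨ (x < 0 ∧ 0 < b) ∨ (U < x ∧ b < 0) then ρ * x + b else ρ * x) ≤ U + 1 := by
  have hn0 : (0:ℝ) < n := by linarith
  obtain ⟨hb1, hb2⟩ := abs_le.1 hb
  have hinv : (1:ℝ) / n ≤ 1 / 21 := one_div_le_one_div_of_le (by norm_num) hn21
  have hinv0 : (0:ℝ) < 1 / n := by positivity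
  have hρ0 : 0 < ρ := by rw [hρ]; linarith
  have hρ1 : ρ ≤ 1 := by rw [hρ]; linarith
  have hρU : U - 1 ≤ ρ * U := by
    have h1 : U * (1 / n) ≤ n * (1 / n) := mul_le_mul_of_nonneg_right hUn hinv0.le
    have h2 : n * (1 / n) = 1 := by field_simp
    rw [hρ]
    nlinarith
  split_ifs with hcond
  · rcases hcond with ⟨h1, h2⟩ | ⟨h1, h2⟩ | ⟨h1, h2⟩
    · constructor
      · nlinarith [mul_nonneg hρ0.le h1]
      · have : ρ * x ≤ ρ * U := mul_le_mul_of_nonneg_left h2 hρ0.le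
        nlinarith [mul_nonneg (show (0:ℝ) ≤ 1 - ρ by linarith) (show (0:ℝ) ≤ U by linarith)]
    · constructor
      · have : ρ * (-1) ≤ ρ * x := mul_le_mul_of_nonneg_left hx1 hρ0.le
        nlinarith
      · have : ρ * x ≤ 0 := mul_nonpos_of_nonneg_of_nonpos hρ0.le h1.le
        linarith
    · constructor
      · have : ρ * U ≤ ρ * x := mul_le_mul_of_nonneg_left h1.le hρ0.le
        linarith
      · have hx0' : (0:ℝ) ≤ x := by linarith
        have : ρ * x ≤ x := by nlinarith [mul_nonneg (show (0:ℝ) ≤ 1 - ρ by linarith) hx0']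
        linarith
  · rcases le_or_gt 0 x with h | h
    · have h1 : 0 ≤ ρ * x := mul_nonneg hρ0.le h
      have h2 : ρ * x ≤ x := by nlinarith [mul_nonneg (show (0:ℝ) ≤ 1 - ρ by linarith) h]
      constructor <;> linarith
    · have h1 : x ≤ ρ * x := by
        nlinarith [mul_nonpos_of_nonneg_of_nonpos (show (0:ℝ) ≤ 1 - ρ by linarith) h.le]
      have h2 : ρ * x ≤ 0 := mul_nonpos_of_nonneg_of_nonpos hρ0.le h.le
      constructor <;> linarith

/-- discounted payoff lower bound for DNP-cu at its own discount
factor `ρ = 1 - 1/n`, relative to the cumulative discounted bits. -/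
theorem dnp_cu_discounted_payoff_rho
    (n Z : ℝ) (hn1 : 1 ≤ n) (hZpos : 0 < Z) (hZ : Z ≤ 1 / Real.exp 1)
    (hn : n ≥ max (8 * Real.exp 1) (16 * Real.log (1 / Z)))
    (U : ℝ) (hU0 : 0 ≤ U) (hU1 : gtilde n Z U = 1) (hU22 : 22 ≤ U)
    (T : ℕ) (b : ℕ → ℝ) (hb : ∀ t ∈ Finset.Icc 1 T, |b t| ≤ 1)
    (ρ : ℝ) (hρ : ρ = 1 - 1 / n)
    (x : ℕ → ℝ) (hx1 : x 1 = 0)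
    (hxrec : ∀ t, 1 ≤ t → t ≤ T →
      x (t + 1) = if (0 ≤ x t ∧ x t ≤ U) ∨ (x t < 0 ∧ 0 < b t) ∨ (U < x t ∧ b t < 0)
        then ρ * x t + b t else ρ * x t) :
    ∑ t ∈ Finset.Icc 1 T, ρ ^ (T - t) * gfun n Z (x t) * b t ≥
      ∑ t ∈ Finset.Icc 1 T, ρ ^ (T - t) * b t - Z / (2 * (1 - ρ)) - U - 1 := by
  have hne : 8 * Real.exp 1 ≤ n := le_trans (le_max_left _ _) hn
  have hnl : 16 * Real.log (1 / Z) ≤ n := le_trans (le_max_right _ _) hn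
  have he9 := Real.exp_one_gt_d9
  have hn21 : 21 ≤ n := by nlinarith
  have hn0 : (0:ℝ) < n := by linarith
  have hn' : n ≠ 0 := ne_of_gt hn0
  have hZ1 : Z ≤ 1 := by
    have h1 : (1:ℝ) ≤ Real.exp 1 := by nlinarith
    have h2 : 1 / Real.exp 1 ≤ 1 := by
      rw [div_le_one (by positivity)]; exact h1
    linarith
  have hUn : U ≤ n := U_le_n hn1 hZpos hne hnl hU0 hU1
  have hinv : (1:ℝ) / n ≤ 1 / 21 := one_div_le_one_div_of_le (by norm_num) hn21
  have hinv0 : (0:ℝ) < 1 / n := by positivity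
  have hρ0 : 0 < ρ := by rw [hρ]; linarith
  have hρ1 : ρ < 1 := by rw [hρ]; linarith
  have hZ0 : 0 ≤ Z := hZpos.le
  -- range invariant
  have hbnd : ∀ t, 1 ≤ t → t ≤ T + 1 → -1 ≤ x t ∧ x t ≤ U + 1 := by
    intro t h1
    induction t, h1 using Nat.le_induction with
    | base => intro _; rw [hx1]; constructor <;> linarith
    | succ t ht IH =>
      intro htT1
      have htT : t ≤ T := by omega
      have hprev := IH (by omega)
      have hbt := hb t (Finset.mem_Icc.2 ⟨ht, htT⟩)
      rw [hxrec t ht htT]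
      exact range_step hn21 hUn hU22 hρ hprev.1 hprev.2 hbt
  -- geometric sum bound
  have sumpow : ∀ m : ℕ, (∑ t ∈ Finset.Icc 1 m, ρ ^ (m - t)) ≤ n := by
    intro m
    induction m with
    | zero => simp; linarith
    | succ m IH =>
      rw [Finset.sum_Icc_succ_top (by omega : 1 ≤ m + 1)]
      have hpow : ∑ t ∈ Finset.Icc 1 m, ρ ^ (m + 1 - t) =
          ρ * ∑ t ∈ Finset.Icc 1 m, ρ ^ (m - t) := by
        rw [Finset.mul_sum]
        apply Finset.sum_congr rfl
        intro t ht
        have h1 : t ≤ m := (Finset.mem_Icc.1 ht).2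
        have h2 : m + 1 - t = (m - t) + 1 := by omega
        rw [h2, pow_succ]; ring
      rw [hpow, Nat.sub_self, pow_zero]
      have hρn : ρ * n = n - 1 := by rw [hρ]; field_simp
      have := mul_le_mul_of_nonneg_left IH hρ0.le
      nlinarith
  -- main inductive bound
  have main : ∀ m : ℕ, m ≤ T →
      ∑ t ∈ Finset.Icc 1 m, ρ ^ (m - t) * ((1 - gfun n Z (x t)) * b t) ≤
        Ffun n Z (x (m + 1)) + (∑ t ∈ Finset.Icc 1 m, ρ ^ (m - t)) * (Z / 2) := by
    intro m
    induction m with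
    | zero =>
      intro _
      simp [hx1, Ffun_zero]
    | succ m IH =>
      intro hmT
      have hm : m ≤ T := by omega
      have IH' := IH hm
      rw [Finset.sum_Icc_succ_top (by omega : 1 ≤ m + 1),
        Finset.sum_Icc_succ_top (by omega : 1 ≤ m + 1)]
      have hpow : ∀ f : ℕ → ℝ, ∑ t ∈ Finset.Icc 1 m, ρ ^ (m + 1 - t) * f t =
          ρ * ∑ t ∈ Finset.Icc 1 m, ρ ^ (m - t) * f t := by
        intro f
        rw [Finset.mul_sum]
        apply Finset.sum_congr rfl
        intro t ht
        have h1 : t ≤ m := (Finset.mem_Icc.1 ht).2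
        have h2 : m + 1 - t = (m - t) + 1 := by omega
        rw [h2, pow_succ]; ring
      have hpow2 : ∑ t ∈ Finset.Icc 1 m, ρ ^ (m + 1 - t) =
          ρ * ∑ t ∈ Finset.Icc 1 m, ρ ^ (m - t) := by
        have := hpow (fun _ => 1)
        simpa using this
      rw [hpow ((fun t => (1 - gfun n Z (x t)) * b t)), hpow2, Nat.sub_self, pow_zero]
      have hbm := hb (m + 1) (Finset.mem_Icc.2 ⟨by omega, by omega⟩)
      have hxm := hbnd (m + 1) (by omega) (by omega)
      have hstep := step_ineq hn1 hn21 hZpos hZ1 hU0 hU1 hU22 hUn hρ hxm.1 hxm.2 hbm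
      rw [← hxrec (m + 1) (by omega) (by omega)] at hstep
      have hIHρ := mul_le_mul_of_nonneg_left IH' hρ0.le
      nlinarith [hstep, hIHρ]
  have hT1 := main T le_rfl
  have hxT := hbnd (T + 1) (by omega) (by omega)
  have hFT : Ffun n Z (x (T + 1)) ≤ U + 1 := by
    rcases le_or_gt 0 (x (T + 1)) with h | h
    · have := Ffun_le_self (Z := Z) hn0 hZ0 h
      linarith [hxT.2]
    · rw [Ffun_eq_id hn0 hZ0 h.le]
      linarith
  have hzr : Z / (2 * (1 - ρ)) = n * Z / 2 := by
    rw [hρ]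
    field_simp
    ring
  have hdiff : ∑ t ∈ Finset.Icc 1 T, ρ ^ (T - t) * b t -
      ∑ t ∈ Finset.Icc 1 T, ρ ^ (T - t) * gfun n Z (x t) * b t =
      ∑ t ∈ Finset.Icc 1 T, ρ ^ (T - t) * ((1 - gfun n Z (x t)) * b t) := by
    rw [← Finset.sum_sub_distrib]
    apply Finset.sum_congr rfl
    intro t _
    ring
  have hsum2 : (∑ t ∈ Finset.Icc 1 T, ρ ^ (T - t)) * (Z / 2) ≤ n * (Z / 2) :=
    mul_le_mul_of_nonneg_right (sumpow T) (by positivity)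
  rw [ge_iff_le, hzr]
  linarith [hT1, hFT, hsum2, hdiff]
end

section
/- Let s_1,…,s_T be reals and 0 < λ_2 < λ_1 < 1. For a discount factor λ ∈ (0,1) define the λ-smoothed average at time j by s_j^λ = (1−λ)·∑_{t=1}^j λ^{j−t}·s_t. Then s_T^{λ_1} = ((1−λ_1)/(1−λ_2))·s_T^{λ_2} + ∑_{j=1}^{T−1} ((1−λ_1)(λ_1−λ_2)·λ_1^{j−1}/(1−λ_2))·s_{T−j}^{λ_2}; moreover, all coefficients in this combination are nonnegative and their sum equals 1 − (λ_1−λ_2)·λ_1^{T−1}/(1−λ_2), which is at most 1. -/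
lemma aux_pow (a b : ℝ) (n : ℕ) :
    b ^ n + (a - b) * ∑ j ∈ Finset.Icc 1 n, a ^ (j - 1) * b ^ (n - j) = a ^ n := by
  induction n with
  | zero => simp
  | succ n ih =>
    rw [Finset.sum_Icc_succ_top (by omega : 1 ≤ n + 1)]
    have hsum : ∑ j ∈ Finset.Icc 1 n, a ^ (j - 1) * b ^ (n + 1 - j)
        = b * ∑ j ∈ Finset.Icc 1 n, a ^ (j - 1) * b ^ (n - j) := by
      rw [Finset.mul_sum]
      refine Finset.sum_congr rfl fun j hj => ?_
      have hj' : j ≤ n := (Finset.mem_Icc.mp hj).2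
      have : n + 1 - j = (n - j) + 1 := by omega
      rw [this, pow_succ]; ring
    rw [hsum]
    have h1 : n + 1 - 1 = n := by omega
    have h2 : n + 1 - (n + 1) = 0 := by omega
    rw [h1, h2]
    linear_combination b * ih

lemma aux_geom (a : ℝ) (n : ℕ) :
    (a - 1) * ∑ j ∈ Finset.Icc 1 n, a ^ (j - 1) = a ^ n - 1 := by
  have := aux_pow a 1 n
  simp only [one_pow, mul_one] at this
  linarith

/-- the `λ₁`-smoothed average at time `T` is a combination of
`λ₂`-smoothed averages at times `j ≤ T`, with nonnegative coefficients summing to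
`1 − (λ₁−λ₂)·λ₁^{T−1}/(1−λ₂) ≤ 1`. -/
theorem smoothed_average_convex_combination
    (T : ℕ) (hT : 1 ≤ T) (s : ℕ → ℝ)
    (l1 l2 : ℝ) (hl2 : 0 < l2) (hl21 : l2 < l1) (hl1 : l1 < 1)
    (sm : ℝ → ℕ → ℝ)
    (hsm : ∀ l j, sm l j = (1 - l) * ∑ t ∈ Finset.Icc 1 j, l ^ (j - t) * s t) :
    sm l1 T = (1 - l1) / (1 - l2) * sm l2 T
        + ∑ j ∈ Finset.Icc 1 (T - 1),
            (1 - l1) * (l1 - l2) * l1 ^ (j - 1) / (1 - l2) * sm l2 (T - j) ∧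
      0 ≤ (1 - l1) / (1 - l2) ∧
      (∀ j ∈ Finset.Icc 1 (T - 1), 0 ≤ (1 - l1) * (l1 - l2) * l1 ^ (j - 1) / (1 - l2)) ∧
      (1 - l1) / (1 - l2)
          + ∑ j ∈ Finset.Icc 1 (T - 1), (1 - l1) * (l1 - l2) * l1 ^ (j - 1) / (1 - l2)
        = 1 - (l1 - l2) * l1 ^ (T - 1) / (1 - l2) ∧
      1 - (l1 - l2) * l1 ^ (T - 1) / (1 - l2) ≤ 1 := by
  have h2 : (0:ℝ) < 1 - l2 := by linarith
  have h2' : (1:ℝ) - l2 ≠ 0 := ne_of_gt h2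
  have h1 : (0:ℝ) < 1 - l1 := by linarith
  have hl1pos : (0:ℝ) < l1 := lt_trans hl2 hl21
  refine ⟨?_, ?_, ?_, ?_, ?_⟩
  · -- main identity
    -- rewrite each coefficient * sm l2 (T - j) as a sum over t
    have hrw : ∀ j ∈ Finset.Icc 1 (T - 1),
        (1 - l1) * (l1 - l2) * l1 ^ (j - 1) / (1 - l2) * sm l2 (T - j)
          = ∑ t ∈ Finset.Icc 1 (T - j),
              (1 - l1) * (l1 - l2) * (l1 ^ (j - 1) * l2 ^ (T - j - t)) * s t := by
      intro j hj
      rw [hsm, Finset.mul_sum, Finset.mul_sum]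
      apply Finset.sum_congr rfl
      intro t ht
      field_simp
    have hS := Finset.sum_congr (Eq.refl (Finset.Icc 1 (T - 1))) hrw
    rw [hS, hsm, hsm]
    -- swap the double sum
    have hswap : ∑ j ∈ Finset.Icc 1 (T - 1), ∑ t ∈ Finset.Icc 1 (T - j),
          (1 - l1) * (l1 - l2) * (l1 ^ (j - 1) * l2 ^ (T - j - t)) * s t
        = ∑ t ∈ Finset.Icc 1 (T - 1), ∑ j ∈ Finset.Icc 1 (T - t),
          (1 - l1) * (l1 - l2) * (l1 ^ (j - 1) * l2 ^ (T - j - t)) * s t := by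
      refine Finset.sum_comm' ?_
      intro j t
      simp only [Finset.mem_Icc]
      omega
    rw [hswap]
    -- simplify (1-l1)/(1-l2) * ((1-l2) * _)
    rw [show (1 - l1) / (1 - l2) * ((1 - l2) * ∑ t ∈ Finset.Icc 1 T, l2 ^ (T - t) * s t)
        = (1 - l1) * ∑ t ∈ Finset.Icc 1 T, l2 ^ (T - t) * s t by field_simp]
    -- split off t = T on both big sums over Icc 1 T
    have hTT : T = (T - 1) + 1 := by omega
    rw [Finset.mul_sum, Finset.mul_sum]
    rw [show Finset.Icc 1 T = Finset.Icc 1 ((T-1)+1) by rw [← hTT]]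
    rw [Finset.sum_Icc_succ_top (by omega : 1 ≤ (T-1)+1),
        Finset.sum_Icc_succ_top (by omega : 1 ≤ (T-1)+1)]
    rw [← hTT, Nat.sub_self]
    rw [add_right_comm, ← Finset.sum_add_distrib]
    congr 1
    refine Finset.sum_congr rfl fun t ht => ?_
    have ht' : 1 ≤ t ∧ t ≤ T - 1 := Finset.mem_Icc.mp ht
    have hsum2 : ∑ j ∈ Finset.Icc 1 (T - t),
          (1 - l1) * (l1 - l2) * (l1 ^ (j - 1) * l2 ^ (T - j - t)) * s t
        = (1 - l1) * s t * ((l1 - l2) * ∑ j ∈ Finset.Icc 1 (T - t),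
            l1 ^ (j - 1) * l2 ^ (T - t - j)) := by
      rw [Finset.mul_sum, Finset.mul_sum]
      refine Finset.sum_congr rfl fun j hj => ?_
      rw [show T - j - t = T - t - j by omega]
      ring
    rw [hsum2]
    have := aux_pow l1 l2 (T - t)
    linear_combination (-((1 - l1) * s t)) * this
  · exact div_nonneg (by linarith) (by linarith)
  · intro j hj
    exact div_nonneg (mul_nonneg (mul_nonneg (by linarith) (by linarith)) (by positivity))
      (by linarith)
  · have hfac : ∑ j ∈ Finset.Icc 1 (T - 1), (1 - l1) * (l1 - l2) * l1 ^ (j - 1) / (1 - l2)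
        = (1 - l1) * (l1 - l2) / (1 - l2) * ∑ j ∈ Finset.Icc 1 (T - 1), l1 ^ (j - 1) := by
      rw [Finset.mul_sum]
      refine Finset.sum_congr rfl fun j hj => by ring
    rw [hfac]
    have hg := aux_geom l1 (T - 1)
    have h1' : l1 - 1 ≠ 0 := by linarith
    field_simp
    linear_combination (l2 - l1) * hg
  · have : (0:ℝ) ≤ (l1 - l2) * l1 ^ (T - 1) / (1 - l2) :=
      div_nonneg (mul_nonneg (by linarith) (by positivity)) (by linarith)
    linarith
end

section
/- Let s_1,…,s_T be reals and 0 < λ_2 ≤ λ_1 < 1. Then (1−λ_1)·∑_{t=1}^T λ_1^{T−t}·s_t ≤ (1−λ_2)·max(0, max_{1≤j≤T} ∑_{t=1}^j λ_2^{j−t}·s_t). -/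
private lemma sum_succ_top (l : ℝ) (s : ℕ → ℝ) (T : ℕ) (hT : 1 ≤ T) :
    ∑ t ∈ Finset.Icc 1 (T + 1), l ^ (T + 1 - t) * s t
      = l * ∑ t ∈ Finset.Icc 1 T, l ^ (T - t) * s t + s (T + 1) := by
  rw [Finset.sum_Icc_succ_top (by omega : 1 ≤ T + 1)]
  simp only [Nat.sub_self, pow_zero, one_mul]
  rw [Finset.mul_sum]
  congr 1
  refine Finset.sum_congr rfl fun t ht => ?_
  rw [Finset.mem_Icc] at ht
  have : T + 1 - t = (T - t) + 1 := by omega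
  rw [this, pow_succ]
  ring

private lemma aux_bound (l1 l2 M : ℝ) (s : ℕ → ℝ)
    (hl2 : 0 < l2) (hl21 : l2 ≤ l1) (hl1 : l1 < 1) (hM0 : 0 ≤ M) :
    ∀ T, 1 ≤ T → (∀ j, 1 ≤ j → j ≤ T → ∑ t ∈ Finset.Icc 1 j, l2 ^ (j - t) * s t ≤ M) →
    (1 - l1) * ∑ t ∈ Finset.Icc 1 T, l1 ^ (T - t) * s t ≤
      (1 - l1) * (∑ t ∈ Finset.Icc 1 T, l2 ^ (T - t) * s t)
        + (l1 - l2) * (1 - l1 ^ (T - 1)) * M := by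
  intro T
  induction T with
  | zero => omega
  | succ T ih =>
    intro _ hA
    rcases Nat.eq_zero_or_pos T with rfl | hT
    · simp
    · have hA' : ∑ t ∈ Finset.Icc 1 T, l2 ^ (T - t) * s t ≤ M :=
        hA T hT (by omega)
      have ihT := ih hT (fun j h1 h2 => hA j h1 (by omega))
      rw [sum_succ_top l1 s T hT, sum_succ_top l2 s T hT]
      set S := ∑ t ∈ Finset.Icc 1 T, l1 ^ (T - t) * s t with hS
      set A := ∑ t ∈ Finset.Icc 1 T, l2 ^ (T - t) * s t with hAdef
      have hpow : l1 ^ (T + 1 - 1) = l1 * l1 ^ (T - 1) := by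
        have : T + 1 - 1 = (T - 1) + 1 := by omega
        rw [this, pow_succ]; ring
      rw [hpow]
      have hl1nn : (0:ℝ) ≤ l1 := le_trans hl2.le hl21
      nlinarith [mul_le_mul_of_nonneg_left ihT hl1nn,
        mul_le_mul_of_nonneg_left hA' (by nlinarith : (0:ℝ) ≤ (1 - l1) * (l1 - l2)),
        pow_nonneg hl1nn (T - 1)]

/-- the `λ₁`-smoothed sum is bounded by the `λ₂` normalization
times the nonnegative part of the maximal `λ₂`-discounted sum over times `j ≤ T`. -/
theorem smoothed_sum_le_max_discounted
    (T : ℕ) (hT : 1 ≤ T) (s : ℕ → ℝ)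
    (l1 l2 : ℝ) (hl2 : 0 < l2) (hl21 : l2 ≤ l1) (hl1 : l1 < 1) :
    (1 - l1) * ∑ t ∈ Finset.Icc 1 T, l1 ^ (T - t) * s t ≤
      (1 - l2) * max 0
        ((Finset.Icc 1 T).sup' (Finset.nonempty_Icc.2 hT)
          (fun j => ∑ t ∈ Finset.Icc 1 j, l2 ^ (j - t) * s t)) := by
  set M := max 0 ((Finset.Icc 1 T).sup' (Finset.nonempty_Icc.2 hT)
      (fun j => ∑ t ∈ Finset.Icc 1 j, l2 ^ (j - t) * s t)) with hM
  have hM0 : 0 ≤ M := le_max_left _ _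
  have hA : ∀ j, 1 ≤ j → j ≤ T → ∑ t ∈ Finset.Icc 1 j, l2 ^ (j - t) * s t ≤ M := by
    intro j h1 h2
    refine le_trans ?_ (le_max_right _ _)
    exact Finset.le_sup' (fun j => ∑ t ∈ Finset.Icc 1 j, l2 ^ (j - t) * s t) (Finset.mem_Icc.2 ⟨h1, h2⟩)
  have key := aux_bound l1 l2 M s hl2 hl21 hl1 hM0 T hT hA
  have hAT := hA T hT le_rfl
  have hl1nn : (0:ℝ) ≤ l1 := le_trans hl2.le hl21
  nlinarith [pow_nonneg hl1nn (T - 1),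
    mul_nonneg (mul_nonneg (by linarith : (0:ℝ) ≤ l1 - l2) (pow_nonneg hl1nn (T - 1))) hM0]
end
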